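/- Let (δ_t) be i.i.d. real random variables with E[e^{ω₀ δ₁}] = 1 for some ω₀ > 0, and define s₀ = 0, s_t = max(s_{t−1} + δ_t, 0). Then for every t and every threshold h > 0, P(s_t ≥ h) ≤ e^{−ω₀ h}. -/

import Mathlib

open MeasureTheory ProbabilityTheory Real

/-- Prefix max of partial sums: `pm n η = max_{0 ≤ k ≤ n} (η 0 + ⋯ + η (k-1))`. -/
def pm : ℕ → (ℕ → ℝ) → ℝ
  | 0, _ => 0
  | n+1, η => max 0 (η 0 + pm n (fun i => η (i+1)))

lemma pm_congr : ∀ (n : ℕ) (η η' : ℕ → ℝ), (∀ i < n, η i = η' i) → pm n η = pm n η'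
  | 0, _, _, _ => rfl
  | n+1, η, η', h => by
      simp only [pm]
      rw [h 0 (Nat.succ_pos n), pm_congr n _ _ (fun i hi => h (i+1) (by omega))]

lemma pm_meas : ∀ n : ℕ, Measurable (pm n)
  | 0 => measurable_const
  | n+1 => measurable_const.max ((measurable_pi_apply 0).add
      ((pm_meas n).comp (measurable_pi_lambda _ fun i => measurable_pi_apply (i+1))))

/-- Key step: if `Y ≥ ...` has an exponential tail bound, `X` has m.g.f. 1 at `ω₀`,
and `X, Y` are independent, then `X + Y` has the same exponential tail bound. -/
lemma step_bound {Ω : Type*} [MeasurableSpace Ω] (μ : Measure Ω) [IsProbabilityMeasure μ]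
    (ω₀ h : ℝ) (hω₀ : 0 < ω₀) (hh : 0 < h) (X Y : Ω → ℝ) (hX : Measurable X)
    (hY : Measurable Y) (hXY : IndepFun X Y μ)
    (hmgfX : ∫ x, Real.exp (ω₀ * X x) ∂μ = 1)
    (htail : ∀ g : ℝ, 0 < g → μ {x | g ≤ Y x} ≤ ENNReal.ofReal (Real.exp (-ω₀ * g))) :
    μ {x | h ≤ X x + Y x} ≤ ENNReal.ofReal (Real.exp (-ω₀ * h)) := by
  have hint : Integrable (fun x => Real.exp (ω₀ * X x)) μ := by
    by_contra hI
    rw [integral_undef hI] at hmgfX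
    norm_num at hmgfX
  have hset : MeasurableSet {p : ℝ × ℝ | h ≤ p.1 + p.2} :=
    measurableSet_le measurable_const (measurable_fst.add measurable_snd)
  have hmap : μ.map (fun ω => (X ω, Y ω)) = (μ.map X).prod (μ.map Y) :=
    (indepFun_iff_map_prod_eq_prod_map_map hX.aemeasurable hY.aemeasurable).mp hXY
  have h1 : μ {x | h ≤ X x + Y x} = ((μ.map X).prod (μ.map Y)) {p | h ≤ p.1 + p.2} := by
    rw [← hmap, Measure.map_apply (hX.prodMk hY) hset]
    rfl
  rw [h1, Measure.prod_apply hset]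
  have key : ∀ a : ℝ, (μ.map Y) (Prod.mk a ⁻¹' {p : ℝ × ℝ | h ≤ p.1 + p.2})
      ≤ ENNReal.ofReal (Real.exp (-ω₀ * h) * Real.exp (ω₀ * a)) := by
    intro a
    have hpre : Prod.mk a ⁻¹' {p : ℝ × ℝ | h ≤ p.1 + p.2} = {y : ℝ | h - a ≤ y} := by
      ext y
      simp only [Set.mem_preimage, Set.mem_setOf_eq]
      constructor
      · intro hy; linarith
      · intro hy; linarith
    have hIci : {y : ℝ | h - a ≤ y} = Set.Ici (h - a) := rfl
    have hmapY : (μ.map Y) (Set.Ici (h - a)) = μ {x | h - a ≤ Y x} := by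
      rw [Measure.map_apply hY measurableSet_Ici]; rfl
    rw [hpre, hIci, hmapY]
    have hexp : Real.exp (-ω₀ * h) * Real.exp (ω₀ * a) = Real.exp (-ω₀ * (h - a)) := by
      rw [← Real.exp_add]; ring_nf
    rw [hexp]
    by_cases hcase : 0 < h - a
    · exact htail _ hcase
    · calc μ {x | h - a ≤ Y x} ≤ 1 := prob_le_one
        _ ≤ ENNReal.ofReal (Real.exp (-ω₀ * (h - a))) := by
            rw [← ENNReal.ofReal_one]
            apply ENNReal.ofReal_le_ofReal
            have h0 : (0:ℝ) ≤ -ω₀ * (h - a) := by nlinarith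
            calc (1:ℝ) = Real.exp 0 := (Real.exp_zero).symm
              _ ≤ _ := Real.exp_le_exp.mpr h0
  calc ∫⁻ a, (μ.map Y) (Prod.mk a ⁻¹' {p : ℝ × ℝ | h ≤ p.1 + p.2}) ∂(μ.map X)
      ≤ ∫⁻ a, ENNReal.ofReal (Real.exp (-ω₀ * h) * Real.exp (ω₀ * a)) ∂(μ.map X) :=
        lintegral_mono key
    _ = ENNReal.ofReal (Real.exp (-ω₀ * h)) * ∫⁻ a, ENNReal.ofReal (Real.exp (ω₀ * a)) ∂(μ.map X) := by
        have hm : Measurable fun a : ℝ => ENNReal.ofReal (Real.exp (ω₀ * a)) :=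
          ((measurable_id.const_mul ω₀).exp).ennreal_ofReal
        simp_rw [ENNReal.ofReal_mul (Real.exp_nonneg _)]
        rw [lintegral_const_mul _ hm]
    _ = ENNReal.ofReal (Real.exp (-ω₀ * h)) := by
        have hm : Measurable fun a : ℝ => ENNReal.ofReal (Real.exp (ω₀ * a)) :=
          ((measurable_id.const_mul ω₀).exp).ennreal_ofReal
        rw [lintegral_map hm hX]
        have heq : ∫⁻ x, ENNReal.ofReal (Real.exp (ω₀ * X x)) ∂μ
            = ENNReal.ofReal (∫ x, Real.exp (ω₀ * X x) ∂μ) :=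
          (ofReal_integral_eq_lintegral_ofReal hint
            (Filter.Eventually.of_forall fun _ => Real.exp_nonneg _)).symm
        rw [heq, hmgfX, ENNReal.ofReal_one, mul_one]

/-- Ville-type inequality for the prefix maximum of partial sums of independent
variables with m.g.f. 1 at `ω₀`. -/
lemma ville {Ω : Type*} [MeasurableSpace Ω] (μ : Measure Ω) [IsProbabilityMeasure μ]
    (δ : ℕ → Ω → ℝ) (hmeas : ∀ i, Measurable (δ i))
    (hindep : iIndepFun δ μ)
    (hident : ∀ i, IdentDistrib (δ i) (δ 0) μ μ)
    (ω₀ : ℝ) (hω₀ : 0 < ω₀)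
    (hmgf : ∫ x, Real.exp (ω₀ * δ 0 x) ∂μ = 1) :
    ∀ (n : ℕ) (g : ℕ → ℕ), Set.InjOn g (Set.Iio n) → ∀ h : ℝ, 0 < h →
      μ {x | h ≤ pm n (fun i => δ (g i) x)} ≤ ENNReal.ofReal (Real.exp (-ω₀ * h)) := by
  have hmgf' : ∀ j, ∫ x, Real.exp (ω₀ * δ j x) ∂μ = 1 := by
    intro j
    have hid : IdentDistrib (fun x => Real.exp (ω₀ * δ j x))
        (fun x => Real.exp (ω₀ * δ 0 x)) μ μ :=
      (hident j).comp ((measurable_const.mul measurable_id).exp)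
    rw [hid.integral_eq, hmgf]
  intro n
  induction n with
  | zero =>
      intro g hg h hh
      have : {x : Ω | h ≤ pm 0 (fun i => δ (g i) x)} = ∅ := by
        ext x; simp [pm]; linarith
      simp [this]
  | succ n ih =>
      intro g hg h hh
      set Y : Ω → ℝ := fun x => pm n (fun i => δ (g (i+1)) x) with hYdef
      have hYmeas : Measurable Y :=
        (pm_meas n).comp (measurable_pi_lambda _ fun i => hmeas _)
      have hEvent : {x : Ω | h ≤ pm (n+1) (fun i => δ (g i) x)}
          = {x : Ω | h ≤ δ (g 0) x + Y x} := by
        ext x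
        simp only [pm, Set.mem_setOf_eq, le_max_iff, hYdef]
        constructor
        · rintro (h1 | h1)
          · linarith
          · exact h1
        · intro h1; exact Or.inr h1
      rw [hEvent]
      -- independence of δ (g 0) and Y
      have hT : ∀ i < n, g (i+1) ∈ (Finset.range n).image (fun i => g (i+1)) := by
        intro i hi
        exact Finset.mem_image.mpr ⟨i, Finset.mem_range.mpr hi, rfl⟩
      set T : Finset ℕ := (Finset.range n).image (fun i => g (i+1)) with hTdef
      have hdisj : Disjoint ({g 0} : Finset ℕ) T := by
        rw [Finset.disjoint_left]
        intro a ha haT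
        rw [Finset.mem_singleton] at ha
        subst ha
        obtain ⟨i, hi, hgi⟩ := Finset.mem_image.mp haT
        rw [Finset.mem_range] at hi
        have h1 : i + 1 ∈ Set.Iio (n + 1) := by simp only [Set.mem_Iio]; omega
        have h2 : (0 : ℕ) ∈ Set.Iio (n + 1) := by simp only [Set.mem_Iio]; omega
        have := hg h1 h2 hgi
        omega
      have hbase := hindep.indepFun_finset {g 0} T hdisj hmeas
      have hφ : Measurable (fun v : ({x // x ∈ ({g 0} : Finset ℕ)} → ℝ) =>
          v ⟨g 0, Finset.mem_singleton_self _⟩) := measurable_pi_apply _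
      set ψ : ({x // x ∈ T} → ℝ) → ℝ := fun v =>
        pm n (fun i => if hh : g (i+1) ∈ T then v ⟨g (i+1), hh⟩ else 0) with hψdef
      have hψ : Measurable ψ := by
        apply (pm_meas n).comp
        apply measurable_pi_lambda
        intro i
        by_cases hmem : g (i+1) ∈ T
        · simp only [hmem, dif_pos]
          exact measurable_pi_apply _
        · simp only [hmem, dif_neg, not_false_iff]
          exact measurable_const
      have hindXY : IndepFun (δ (g 0)) Y μ := by
        have h2 := hbase.comp hφ hψ
        have heq1 : (fun v : ({x // x ∈ ({g 0} : Finset ℕ)} → ℝ) =>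
            v ⟨g 0, Finset.mem_singleton_self _⟩) ∘ (fun a (i : ({g 0} : Finset ℕ)) => δ i a)
            = δ (g 0) := rfl
        have heq2 : ψ ∘ (fun a (i : T) => δ i a) = Y := by
          funext a
          simp only [Function.comp_apply, hψdef, hYdef]
          apply pm_congr
          intro i hi
          rw [dif_pos (hT i hi)]
        rwa [heq1, heq2] at h2
      apply step_bound μ ω₀ h hω₀ hh (δ (g 0)) Y (hmeas _) hYmeas hindXY (hmgf' _)
      intro g' hg'
      refine ih (fun i => g (i+1)) ?_ g' hg'
      intro a ha b hb hab
      simp only [Set.mem_Iio] at ha hb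
      have h1 : a + 1 ∈ Set.Iio (n + 1) := by simp only [Set.mem_Iio]; omega
      have h2 : b + 1 ∈ Set.Iio (n + 1) := by simp only [Set.mem_Iio]; omega
      have := hg h1 h2 (by simpa using hab)
      omega

/-- Exponential bound on the tail of the CUSUM statistic driven by i.i.d.
increments whose m.g.f. equals 1 at ω₀ > 0. -/
theorem cusum_tail_bound {Ω : Type*} [MeasurableSpace Ω] (μ : Measure Ω)
    [IsProbabilityMeasure μ] (δ : ℕ → Ω → ℝ) (hmeas : ∀ i, Measurable (δ i))
    (hindep : iIndepFun δ μ)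
    (hident : ∀ i, IdentDistrib (δ i) (δ 0) μ μ)
    (ω₀ : ℝ) (hω₀ : 0 < ω₀)
    (hmgf : ∫ x, Real.exp (ω₀ * δ 0 x) ∂μ = 1)
    (s : ℕ → Ω → ℝ) (h0 : ∀ x, s 0 x = 0)
    (hrec : ∀ t x, s (t + 1) x = max (s t x + δ (t + 1) x) 0) :
    ∀ (t : ℕ) (h : ℝ), 0 < h →
      μ {x | h ≤ s t x} ≤ ENNReal.ofReal (Real.exp (-ω₀ * h)) := by
  intro t h hh
  have hs : ∀ t x, s t x = pm t (fun i => δ (t - i) x) := by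
    intro t
    induction t with
    | zero => intro x; simp [pm, h0]
    | succ t ih =>
        intro x
        rw [hrec t x, ih x]
        simp only [pm, Nat.succ_sub_succ_eq_sub, Nat.sub_zero]
        rw [max_comm, add_comm]
  have hEvent : {x : Ω | h ≤ s t x} = {x : Ω | h ≤ pm t (fun i => δ (t - i) x)} := by
    ext x; simp only [Set.mem_setOf_eq]; rw [hs t x]
  rw [hEvent]
  exact ville μ δ hmeas hindep hident ω₀ hω₀ hmgf t (fun i => t - i)
    (fun a ha b hb hab => by
      simp only [Set.mem_Iio] at ha hb
      have hab' : t - a = t - b := hab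
      omega) h hh
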